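/- Let P_n be the normalized Hermite polynomials and g_n'(x) the derivative of g_n(x) = ∑_{k=0}^n P_k(x)². Then |g_n'(x)| ≤ 4|x| g_n(x) for all n ≥ 1 and all real x. -/

import Mathlib

noncomputable def cAux (P : ℕ → ℝ → ℝ) (x : ℝ) : ℕ → ℝ
  | 0 => P 0 x ^ 2
  | (k+1) => P (k+1) x ^ 2 - cAux P x k

noncomputable def dAux (P : ℕ → ℝ → ℝ) (x : ℝ) : ℕ → ℝ
  | 0 => 0
  | (k+1) => 2 * P (k+1) x * (Real.sqrt (2 * ((k:ℝ) + 1)) * P k x)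

lemma sqrt_two_mul (m : ℝ) (_hm : 0 ≤ m) :
    Real.sqrt (2 * m) = 2 * Real.sqrt (m / 2) := by
  have h4 : Real.sqrt 4 = 2 := by
    rw [show (4:ℝ) = 2^2 by norm_num, Real.sqrt_sq (by norm_num)]
  rw [show (2*m) = 4 * (m/2) by ring, Real.sqrt_mul (by norm_num), h4]

/-- For the normalized Hermite polynomials, the derivative of
`g n (x) = ∑_{k=0}^{n} P k (x) ²` satisfies `|g n '(x)| ≤ 4 |x| g n (x)`. -/
theorem stmt_15 (P : ℕ → ℝ → ℝ)
    (hP0 : ∀ x, P 0 x = 1) (hP1 : ∀ x, P 1 x = Real.sqrt 2 * x)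
    (hPrec : ∀ k : ℕ, ∀ x, Real.sqrt ((k + 2) / 2) * P (k + 2) x
      = x * P (k + 1) x - Real.sqrt ((k + 1) / 2) * P k x)
    (hPderiv : ∀ k : ℕ, ∀ x, HasDerivAt (P (k + 1)) (Real.sqrt (2 * (k + 1)) * P k x) x) :
    ∀ n : ℕ, 1 ≤ n → ∀ x : ℝ,
      |deriv (fun y => ∑ k ∈ Finset.range (n + 1), P k y ^ 2) x|
        ≤ 4 * |x| * ∑ k ∈ Finset.range (n + 1), P k x ^ 2 := by
  intro n hn x
  -- the key identity: a_k = 2 x c_k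
  have haId : ∀ k : ℕ, Real.sqrt (2 * ((k:ℝ) + 1)) * P (k+1) x * P k x
      = 2 * x * cAux P x k := by
    intro k
    induction k with
    | zero =>
      simp only [cAux, hP0, hP1]
      have h2 : Real.sqrt 2 * Real.sqrt 2 = 2 :=
        Real.mul_self_sqrt (by norm_num)
      push_cast
      norm_num
      linear_combination x * h2
    | succ k ih =>
      have hs : Real.sqrt (2 * ((k:ℝ) + 1 + 1)) = 2 * Real.sqrt (((k:ℝ) + 2) / 2) := by
        rw [show ((k:ℝ) + 1 + 1) = (k:ℝ) + 2 by ring]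
        exact sqrt_two_mul _ (by positivity)
      have hs' : Real.sqrt (2 * ((k:ℝ) + 1)) = 2 * Real.sqrt (((k:ℝ) + 1) / 2) :=
        sqrt_two_mul _ (by positivity)
      have hrec := hPrec k x
      have : Real.sqrt (2 * ((k:ℝ) + 1 + 1)) * P (k+2) x * P (k+1) x
          = 2 * x * P (k+1) x ^ 2
            - Real.sqrt (2 * ((k:ℝ) + 1)) * P (k+1) x * P k x := by
        rw [hs, hs']
        linear_combination 2 * P (k+1) x * hrec
      rw [show cAux P x (k+1) = P (k+1) x ^ 2 - cAux P x k from rfl]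
      push_cast at this ⊢
      rw [this, ih]
      ring
  -- partial sums of c are between 0 and g
  have hD : ∀ m : ℕ,
      (0 ≤ ∑ k ∈ Finset.range m, cAux P x k ∧
        ∑ k ∈ Finset.range m, cAux P x k ≤ ∑ k ∈ Finset.range m, P k x ^ 2) ∧
      (0 ≤ ∑ k ∈ Finset.range (m+1), cAux P x k ∧
        ∑ k ∈ Finset.range (m+1), cAux P x k ≤ ∑ k ∈ Finset.range (m+1), P k x ^ 2) := by
    intro m
    induction m with
    | zero =>
      refine ⟨⟨le_refl _, le_refl _⟩, ?_, ?_⟩ <;>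
        simp [cAux, hP0] <;> positivity
    | succ m ih =>
      refine ⟨ih.2, ?_, ?_⟩
      · have h1 : ∑ k ∈ Finset.range (m+2), cAux P x k
            = ∑ k ∈ Finset.range m, cAux P x k + P (m+1) x ^ 2 := by
          rw [Finset.sum_range_succ, Finset.sum_range_succ,
            show cAux P x (m+1) = P (m+1) x ^ 2 - cAux P x m from rfl]
          ring
        rw [h1]
        have := ih.1.1
        positivity
      · have h1 : ∑ k ∈ Finset.range (m+2), cAux P x k
            = ∑ k ∈ Finset.range m, cAux P x k + P (m+1) x ^ 2 := by
          rw [Finset.sum_range_succ, Finset.sum_range_succ,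
            show cAux P x (m+1) = P (m+1) x ^ 2 - cAux P x m from rfl]
          ring
        have h2 : ∑ k ∈ Finset.range (m+2), P k x ^ 2
            = (∑ k ∈ Finset.range m, P k x ^ 2) + P m x ^ 2 + P (m+1) x ^ 2 := by
          rw [Finset.sum_range_succ, Finset.sum_range_succ]
        rw [h1, h2]
        have := ih.1.2
        nlinarith [sq_nonneg (P m x)]
  -- the derivative
  have hder : HasDerivAt (fun y => ∑ k ∈ Finset.range (n + 1), P k y ^ 2)
      (∑ k ∈ Finset.range (n + 1), dAux P x k) x := by
    apply HasDerivAt.fun_sum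
    intro k _
    match k with
    | 0 =>
      have he : (fun y => P 0 y ^ 2) = fun _ : ℝ => (1:ℝ) := by
        funext y; rw [hP0]; norm_num
      rw [show dAux P x 0 = 0 from rfl, he]
      exact hasDerivAt_const x 1
    | (k+1) =>
      have h := (hPderiv k x).pow 2
      have : dAux P x (k+1)
          = 2 * P (k+1) x ^ (2-1) * (Real.sqrt (2 * ((k:ℝ) + 1)) * P k x) := by
        rw [show dAux P x (k+1)
          = 2 * P (k+1) x * (Real.sqrt (2 * ((k:ℝ) + 1)) * P k x) from rfl]
        ring
      rw [this]
      push_cast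
      exact h
  rw [hder.deriv]
  -- rewrite the sum of derivatives
  have hsum : ∑ k ∈ Finset.range (n + 1), dAux P x k
      = 4 * x * ∑ k ∈ Finset.range n, cAux P x k := by
    rw [Finset.sum_range_succ', Finset.mul_sum]
    rw [show dAux P x 0 = 0 from rfl, add_zero]
    apply Finset.sum_congr rfl
    intro k _
    rw [show dAux P x (k+1)
      = 2 * P (k+1) x * (Real.sqrt (2 * ((k:ℝ) + 1)) * P k x) from rfl]
    linear_combination 2 * haId k
  rw [hsum]
  have hD1 := (hD n).1.1
  have hD2 := (hD n).1.2
  have habs : |4 * x * ∑ k ∈ Finset.range n, cAux P x k|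
      = 4 * |x| * (∑ k ∈ Finset.range n, cAux P x k) := by
    rw [abs_mul, abs_mul, abs_of_nonneg hD1]
    norm_num
  rw [habs]
  have hmono : ∑ k ∈ Finset.range n, P k x ^ 2
      ≤ ∑ k ∈ Finset.range (n+1), P k x ^ 2 := by
    rw [Finset.sum_range_succ]
    nlinarith [sq_nonneg (P n x)]
  have h4x : 0 ≤ 4 * |x| := by positivity
  nlinarith [mul_le_mul_of_nonneg_left (hD2.trans hmono) h4x]
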